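/- arXiv:1308.3178 — 3 statements merged into one kernel-verified Lean document; each statement's English description precedes it below -/
import Mathlib

section
/- For odd n ≥ 5, the graph obtained from the complete multipartite graph with parts of sizes 3,2,2,...,2 (one part of size 3 and (n-3)/2 parts of size 2) by adding one edge inside the part of size 3 has exactly (n(n-2)-3)/2 total dominating sets of size 2. -/
def partIdx (n : ℕ) (v : Fin n) : ℕ :=
  if v.val < 3 then 0 else (v.val - 1) / 2

def multipartitePlusEdge (n : ℕ) : SimpleGraph (Fin n) :=
  SimpleGraph.fromRel (fun v w => partIdx n v ≠ partIdx n w ∨ (v.val = 0 ∧ w.val = 1))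

lemma adj_iff {n : ℕ} (v w : Fin n) :
    (multipartitePlusEdge n).Adj v w ↔ v ≠ w ∧
      (partIdx n v ≠ partIdx n w ∨ (v.val = 0 ∧ w.val = 1) ∨ (w.val = 0 ∧ v.val = 1)) := by
  simp [multipartitePlusEdge, SimpleGraph.fromRel_adj]
  tauto

lemma partIdx_ne_imp {n : ℕ} {v w : Fin n} (h : partIdx n v ≠ partIdx n w) : v ≠ w := by
  rintro rfl; exact h rfl

lemma pair_eq_pair_iff' {α : Type*} [DecidableEq α] {a b u w : α} (huw : u ≠ w) :
    ({a, b} : Finset α) = {u, w} ↔ (a = u ∧ b = w) ∨ (a = w ∧ b = u) := by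
  constructor
  · intro h
    have ha : a ∈ ({u, w} : Finset α) := h ▸ Finset.mem_insert_self a {b}
    have hb : b ∈ ({u, w} : Finset α) := h ▸ Finset.mem_insert_of_mem (Finset.mem_singleton_self b)
    have hu : u ∈ ({a, b} : Finset α) := h ▸ Finset.mem_insert_self u {w}
    have hw : w ∈ ({a, b} : Finset α) := h ▸ Finset.mem_insert_of_mem (Finset.mem_singleton_self w)
    simp only [Finset.mem_insert, Finset.mem_singleton] at ha hb hu hw
    rcases ha with rfl | rfl <;> rcases hb with rfl | rfl <;> tauto
  · rintro (⟨rfl, rfl⟩ | ⟨rfl, rfl⟩)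
    · rfl
    · exact Finset.pair_comm a b

lemma char {n : ℕ} (hn : 5 ≤ n) (S : Finset (Fin n)) :
    (S.card = 2 ∧ ∀ v : Fin n, ∃ u ∈ S, (multipartitePlusEdge n).Adj v u) ↔
      ∃ u w : Fin n, partIdx n u ≠ partIdx n w ∧ S = {u, w} := by
  constructor
  · rintro ⟨hcard, htd⟩
    obtain ⟨a, b, hab, rfl⟩ := Finset.card_eq_two.mp hcard
    by_cases hp : partIdx n a = partIdx n b
    · exfalso
      obtain ⟨u, hu, hadj⟩ := htd a
      have hub : u = b := by
        simp only [Finset.mem_insert, Finset.mem_singleton] at hu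
        rcases hu with rfl | rfl
        · exact absurd hadj ((multipartitePlusEdge n).irrefl)
        · rfl
      subst hub
      rw [adj_iff] at hadj
      obtain ⟨-, h01⟩ := hadj
      have hvals : a.val < 3 ∧ u.val < 3 := by
        rcases h01 with h | ⟨h0, h1⟩ | ⟨h0, h1⟩
        · exact absurd hp h
        all_goals omega
      obtain ⟨v, hv, hadj2⟩ := htd ⟨2, by omega⟩
      simp only [Finset.mem_insert, Finset.mem_singleton] at hv
      rw [adj_iff] at hadj2
      obtain ⟨-, hc⟩ := hadj2
      have hval : v.val < 3 := by rcases hv with rfl | rfl <;> omega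
      have hval01 : v.val = 0 ∨ v.val = 1 := by
        rcases h01 with h | ⟨h0, h1⟩ | ⟨h0, h1⟩
        · exact absurd hp h
        all_goals rcases hv with rfl | rfl <;> omega
      have hpv : partIdx n v = 0 := by unfold partIdx; rw [if_pos hval]
      have hp2 : partIdx n (⟨2, by omega⟩ : Fin n) = 0 := by
        unfold partIdx; rw [if_pos (by norm_num)]
      simp only [hpv, hp2] at hc
      omega
    · exact ⟨a, b, hp, rfl⟩
  · rintro ⟨u, w, hp, rfl⟩
    have huw : u ≠ w := partIdx_ne_imp hp
    refine ⟨Finset.card_pair huw, fun v => ?_⟩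
    by_cases hv : partIdx n v = partIdx n u
    · exact ⟨w, by simp, (adj_iff v w).mpr ⟨partIdx_ne_imp (hv ▸ hp), Or.inl (hv ▸ hp)⟩⟩
    · exact ⟨u, by simp, (adj_iff v u).mpr ⟨partIdx_ne_imp hv, Or.inl hv⟩⟩

lemma fiber_card {n : ℕ} (hn : 5 ≤ n) (hodd : n % 2 = 1) (u : Fin n) :
    (Finset.univ.filter fun w : Fin n => partIdx n u = partIdx n w).card =
      if u.val < 3 then 3 else 2 := by
  have hub : u.val < n := u.isLt
  have key : ∀ w : Fin n, (partIdx n u = partIdx n w) =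
      (w.val ∈ if u.val < 3 then ({0, 1, 2} : Finset ℕ)
        else {2 * ((u.val - 1) / 2) + 1, 2 * ((u.val - 1) / 2) + 2}) := by
    intro w
    have hwb := w.isLt
    unfold partIdx
    by_cases hu : u.val < 3 <;> by_cases hw : w.val < 3 <;>
      simp only [hu, hw, if_true, if_false, Finset.mem_insert, Finset.mem_singleton,
        eq_iff_iff] <;> (try rw [true_iff]) <;> omega
  split_ifs with hu
  · have heq : (Finset.univ.filter fun w : Fin n => partIdx n u = partIdx n w) =
        {(⟨0, by omega⟩ : Fin n), ⟨1, by omega⟩, ⟨2, by omega⟩} := by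
      ext w
      simp only [Finset.mem_filter, Finset.mem_univ, true_and, key w, hu, if_true,
        Finset.mem_insert, Finset.mem_singleton, Fin.ext_iff]
    rw [heq]
    rw [Finset.card_insert_of_notMem (by simp [Fin.ext_iff]),
      Finset.card_insert_of_notMem (by simp [Fin.ext_iff]), Finset.card_singleton]
  · have h1 : 2 * ((u.val - 1) / 2) + 1 < n := by omega
    have h2 : 2 * ((u.val - 1) / 2) + 2 < n := by omega
    have heq : (Finset.univ.filter fun w : Fin n => partIdx n u = partIdx n w) =
        {(⟨2 * ((u.val - 1) / 2) + 1, h1⟩ : Fin n), ⟨2 * ((u.val - 1) / 2) + 2, h2⟩} := by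
      ext w
      simp only [Finset.mem_filter, Finset.mem_univ, true_and, key w, hu, if_false,
        Finset.mem_insert, Finset.mem_singleton, Fin.ext_iff]
    rw [heq, Finset.card_pair (by simp [Fin.ext_iff])]

/-- For odd `n ≥ 5`, the complete multipartite graph `K_{3,2,…,2}` with one edge added in
the part of size 3 has exactly `(n(n-2)-3)/2` total dominating sets of size 2. -/
theorem stmt7 (n : ℕ) (hn : 5 ≤ n) (hodd : Odd n) :
    {S : Finset (Fin n) | S.card = 2 ∧
        ∀ v : Fin n, ∃ u ∈ S, (multipartitePlusEdge n).Adj v u}.ncard =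
      (n * (n - 2) - 3) / 2 := by
  classical
  have hmod : n % 2 = 1 := Nat.odd_iff.mp hodd
  set D : Finset (Fin n × Fin n) :=
    Finset.univ.filter (fun p => partIdx n p.1 ≠ partIdx n p.2) with hD
  set T : Finset (Finset (Fin n)) := D.image (fun p => {p.1, p.2}) with hT
  have hset : {S : Finset (Fin n) | S.card = 2 ∧
      ∀ v : Fin n, ∃ u ∈ S, (multipartitePlusEdge n).Adj v u} = ↑T := by
    ext S
    rw [Set.mem_setOf_eq, char hn S]
    simp only [hT, Finset.coe_image, Set.mem_image, Finset.mem_coe, Finset.mem_filter,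
      Finset.mem_univ, true_and, hD]
    constructor
    · rintro ⟨u, w, hp, rfl⟩; exact ⟨(u, w), hp, rfl⟩
    · rintro ⟨⟨u, w⟩, hp, rfl⟩; exact ⟨u, w, hp, rfl⟩
  rw [hset, Set.ncard_coe_finset]
  have hDT : D.card = 2 * T.card := by
    rw [Finset.card_eq_sum_card_image (fun p : Fin n × Fin n => ({p.1, p.2} : Finset (Fin n))) D]
    rw [Finset.sum_congr rfl (fun b hb => ?_), Finset.sum_const, smul_eq_mul, mul_comm]
    obtain ⟨⟨u, w⟩, hpD, hb⟩ := Finset.mem_image.mp hb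
    have hpne : partIdx n u ≠ partIdx n w := by simpa [hD] using hpD
    have huw : u ≠ w := partIdx_ne_imp hpne
    have hfe : D.filter (fun p => ({p.1, p.2} : Finset (Fin n)) = b) = {(u, w), (w, u)} := by
      ext ⟨a, c⟩
      simp only [Finset.mem_filter, hD, Finset.mem_univ, true_and, ← hb,
        Finset.mem_insert, Finset.mem_singleton, Prod.mk.injEq]
      constructor
      · rintro ⟨hac, heq⟩
        rcases (pair_eq_pair_iff' huw).mp heq with ⟨rfl, rfl⟩ | ⟨rfl, rfl⟩ <;> tauto
      · rintro (⟨rfl, rfl⟩ | ⟨rfl, rfl⟩)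
        · exact ⟨hpne, rfl⟩
        · exact ⟨fun h => hpne h.symm, Finset.pair_comm _ _⟩
    rw [hfe, Finset.card_pair (fun h => huw (congrArg Prod.fst h))]
  have hE : (Finset.univ.filter (fun p : Fin n × Fin n => partIdx n p.1 = partIdx n p.2)).card
      = 2 * n + 3 := by
    have h1 : (Finset.univ.filter (fun p : Fin n × Fin n => partIdx n p.1 = partIdx n p.2)).card
        = ∑ u : Fin n, (Finset.univ.filter fun w : Fin n => partIdx n u = partIdx n w).card := by
      simp only [Finset.card_filter]
      rw [Fintype.sum_prod_type]
    rw [h1, Finset.sum_congr rfl (fun u _ => fiber_card hn hmod u)]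
    rw [Fin.sum_univ_eq_sum_range (fun i => if i < 3 then 3 else 2) n]
    have h2 : ∀ i, (if i < 3 then 3 else 2) = 2 + (if i < 3 then 1 else 0) := by
      intro i; split_ifs <;> rfl
    simp only [h2]
    rw [Finset.sum_add_distrib, Finset.sum_const, Finset.card_range, smul_eq_mul, mul_comm 2 n]
    have h3 : (∑ i ∈ Finset.range n, if i < 3 then 1 else 0) =
        ((Finset.range n).filter (· < 3)).card := (Finset.card_filter _ _).symm
    have h4 : (Finset.range n).filter (· < 3) = Finset.range 3 := by
      ext i; simp only [Finset.mem_filter, Finset.mem_range]; omega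
    rw [h3, h4, Finset.card_range]
  have htot : D.card + (2 * n + 3) = n * n := by
    have h5 := Finset.card_filter_add_card_filter_not
      (s := (Finset.univ : Finset (Fin n × Fin n)))
      (p := fun p => partIdx n p.1 = partIdx n p.2)
    rw [Finset.card_univ, Fintype.card_prod, Fintype.card_fin, hE] at h5
    have h6 : (Finset.univ.filter fun p : Fin n × Fin n =>
        ¬ partIdx n p.1 = partIdx n p.2) = D := by
      rw [hD]
    rw [h6] at h5
    omega
  obtain ⟨s, rfl⟩ : ∃ s, n = 2 * s + 5 := ⟨(n - 5) / 2, by omega⟩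
  have e1 : (2 * s + 5) * (2 * s + 5) = 4 * (s * s) + 20 * s + 25 := by ring
  have e2 : (2 * s + 5) * ((2 * s + 5) - 2) = 4 * (s * s) + 16 * s + 15 := by
    have h : (2 * s + 5) - 2 = 2 * s + 3 := by omega
    rw [h]; ring
  omega
end

section
/- For odd n ≥ 5, every graph G on n vertices with domination number 2 has at most C(n,2) - 1 dominating sets of size 2; i.e., some 2-element subset of vertices fails to dominate. -/
lemma even_card_of_invol {α : Type*} [DecidableEq α] (f : α → α) :
    ∀ s : Finset α, (∀ x ∈ s, f x ∈ s) → (∀ x ∈ s, f (f x) = x) →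
    (∀ x ∈ s, f x ≠ x) → Even s.card := by
  intro s
  induction s using Finset.strongInduction with
  | _ s ih =>
    intro hmem hinv hne
    rcases s.eq_empty_or_nonempty with rfl | ⟨x, hx⟩
    · simp
    · have hfx : f x ∈ s := hmem x hx
      have hxne : f x ≠ x := hne x hx
      set t := s \ {x, f x} with ht
      have htsub : t ⊂ s := by
        refine Finset.sdiff_ssubset ?_ (by simp)
        intro y hy
        simp at hy
        rcases hy with rfl | rfl
        · exact hx
        · exact hfx
      have hmemt : ∀ y ∈ t, f y ∈ t := by
        intro y hy
        simp only [ht, Finset.mem_sdiff, Finset.mem_insert, Finset.mem_singleton] at hy ⊢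
        obtain ⟨hys, hy1⟩ := hy
        push_neg at hy1
        refine ⟨hmem y hys, ?_⟩
        rintro (h | h)
        · exact hy1.2 (by rw [← hinv y hys, h])
        · exact hy1.1 (by rw [← hinv y hys, h, hinv x hx])
      have hcard : s.card = t.card + 2 := by
        have : ({x, f x} : Finset α) ⊆ s := by
          intro y hy; simp at hy; rcases hy with rfl | rfl
          · exact hx
          · exact hfx
        have h2le := Finset.card_le_card this
        rw [Finset.card_pair (Ne.symm hxne)] at h2le
        rw [ht, Finset.card_sdiff_of_subset this, Finset.card_pair (Ne.symm hxne)]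
        omega
      have := ih t htsub hmemt
        (fun y hy => hinv y (Finset.mem_sdiff.mp hy).1)
        (fun y hy => hne y (Finset.mem_sdiff.mp hy).1)
      rw [hcard]
      exact this.add even_two

/-- For odd `n ≥ 5`, every graph on `n` vertices with domination number 2 has some
non-dominating 2-set, hence at most `C(n,2) - 1` dominating sets of size 2. -/
theorem stmt10 (n : ℕ) (hn : 5 ≤ n) (hodd : Odd n) (G : SimpleGraph (Fin n))
    (hex : ∃ S : Finset (Fin n), S.card = 2 ∧ ∀ w ∉ S, ∃ u ∈ S, G.Adj w u)
    (hmin : ∀ S : Finset (Fin n), (∀ w ∉ S, ∃ u ∈ S, G.Adj w u) → 2 ≤ S.card) :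
    (∃ S : Finset (Fin n), S.card = 2 ∧ ¬ ∀ w ∉ S, ∃ u ∈ S, G.Adj w u) ∧
    {S : Finset (Fin n) | S.card = 2 ∧ ∀ w ∉ S, ∃ u ∈ S, G.Adj w u}.ncard ≤
      n.choose 2 - 1 := by
  -- Step 1: some 2-set fails to dominate
  have hmain : ∃ S : Finset (Fin n), S.card = 2 ∧ ¬ ∀ w ∉ S, ∃ u ∈ S, G.Adj w u := by
    by_contra hcon
    push_neg at hcon
    have hdom : ∀ S : Finset (Fin n), S.card = 2 → ∀ w ∉ S, ∃ u ∈ S, G.Adj w u := hcon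
    -- each vertex has a non-neighbor
    have hexnn : ∀ x : Fin n, ∃ w, w ≠ x ∧ ¬ G.Adj x w := by
      intro x
      by_contra h
      push_neg at h
      have := hmin {x} (by
        intro w hw
        simp only [Finset.mem_singleton] at hw
        exact ⟨x, Finset.mem_singleton_self x, (h w hw).symm⟩)
      simp at this
    -- uniqueness of non-neighbor
    have huniq : ∀ x w₁ w₂ : Fin n, w₁ ≠ x → w₂ ≠ x → ¬ G.Adj x w₁ → ¬ G.Adj x w₂ →
        w₁ = w₂ := by
      intro x w₁ w₂ h1 h2 hn1 hn2
      by_contra hne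
      have hS : ({w₁, w₂} : Finset (Fin n)).card = 2 := Finset.card_pair hne
      obtain ⟨u, hu, hadj⟩ := hdom {w₁, w₂} hS x (by simp [Ne.symm h1, Ne.symm h2])
      simp only [Finset.mem_insert, Finset.mem_singleton] at hu
      rcases hu with rfl | rfl
      · exact hn1 hadj
      · exact hn2 hadj
    choose f hf1 hf2 using hexnn
    have hinv : ∀ x, f (f x) = x := by
      intro x
      exact huniq (f x) (f (f x)) x (hf1 (f x)) (fun h => hf1 x h.symm)
        (hf2 (f x)) (fun h => hf2 x h.symm)
    have heven : Even (Finset.univ : Finset (Fin n)).card :=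
      even_card_of_invol f Finset.univ (fun x _ => Finset.mem_univ _)
        (fun x _ => hinv x) (fun x _ => hf1 x)
    rw [Finset.card_univ, Fintype.card_fin] at heven
    exact (Nat.not_even_iff_odd.mpr hodd) heven
  refine ⟨hmain, ?_⟩
  obtain ⟨S₀, hS₀card, hS₀⟩ := hmain
  have hsub : {S : Finset (Fin n) | S.card = 2 ∧ ∀ w ∉ S, ∃ u ∈ S, G.Adj w u} ⊆
      {S : Finset (Fin n) | S.card = 2} \ {S₀} := by
    intro S hS
    refine ⟨hS.1, ?_⟩
    intro h
    rw [Set.mem_singleton_iff] at h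
    subst h
    exact hS₀ hS.2
  have h2 : ({S : Finset (Fin n) | S.card = 2} : Set (Finset (Fin n))) =
      ↑(Finset.univ.powersetCard 2 : Finset (Finset (Fin n))) := by
    ext S
    simp [Finset.mem_powersetCard, Finset.subset_univ]
  have hcard2 : ({S : Finset (Fin n) | S.card = 2} : Set (Finset (Fin n))).ncard =
      n.choose 2 := by
    rw [h2, Set.ncard_coe_finset, Finset.card_powersetCard, Finset.card_univ,
      Fintype.card_fin]
  calc {S : Finset (Fin n) | S.card = 2 ∧ ∀ w ∉ S, ∃ u ∈ S, G.Adj w u}.ncard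
      ≤ ({S : Finset (Fin n) | S.card = 2} \ {S₀}).ncard :=
        Set.ncard_le_ncard hsub (Set.toFinite _)
    _ = ({S : Finset (Fin n) | S.card = 2}).ncard - 1 :=
        Set.ncard_diff_singleton_of_mem (s := {S : Finset (Fin n) | S.card = 2}) hS₀card
    _ = n.choose 2 - 1 := by rw [hcard2]
end

section
/- For even x ≥ 2 and n divisible by x, the disjoint union of x/2 copies of (K_{2n/x} minus a perfect matching) is a graph on n vertices with domination number x having at least C(2n/x, 2)^{x/2} dominating sets of size x; in particular the number of such dominating sets is Ω(n^x) for fixed x. -/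
/-- The disjoint union of `x/2` copies of the graph `K_{2n/x}` minus a perfect matching,
on the vertex set `Fin (x/2) × Fin (2n/x)` (of cardinality `n` whenever `x ∣ n`). -/
def copiesKminusPM (n x : ℕ) : SimpleGraph (Fin (x / 2) × Fin (2 * n / x)) :=
  SimpleGraph.fromRel (fun v w => v.1 = w.1 ∧ v.2.val / 2 ≠ w.2.val / 2)

lemma adj_iff18 {n x : ℕ} {v w : Fin (x / 2) × Fin (2 * n / x)} :
    (copiesKminusPM n x).Adj v w ↔
      v ≠ w ∧ v.1 = w.1 ∧ v.2.val / 2 ≠ w.2.val / 2 := by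
  simp only [copiesKminusPM, SimpleGraph.fromRel_adj]
  constructor
  · rintro ⟨hne, h | h⟩
    · exact ⟨hne, h⟩
    · exact ⟨hne, h.1.symm, fun e => h.2 e.symm⟩
  · rintro ⟨hne, h⟩
    exact ⟨hne, Or.inl h⟩

/-- For even `x ≥ 2` and `n` divisible by `x` with `2n/x ≥ 4`, the disjoint union of
`x/2` copies of `K_{2n/x}` minus a perfect matching is a graph on `n` vertices with
domination number `x` having at least `C(2n/x, 2)^(x/2)` dominating sets of size `x`. -/
theorem stmt18 (n x : ℕ) (hx : 2 ≤ x) (hxe : Even x) (hdvd : x ∣ n)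
    (hsz : 4 ≤ 2 * n / x) :
    Fintype.card (Fin (x / 2) × Fin (2 * n / x)) = n ∧
    (∃ S : Finset (Fin (x / 2) × Fin (2 * n / x)), S.card = x ∧
      ∀ w ∉ S, ∃ u ∈ S, (copiesKminusPM n x).Adj w u) ∧
    (∀ S : Finset (Fin (x / 2) × Fin (2 * n / x)),
      (∀ w ∉ S, ∃ u ∈ S, (copiesKminusPM n x).Adj w u) → x ≤ S.card) ∧
    ((2 * n / x).choose 2) ^ (x / 2) ≤
      {S : Finset (Fin (x / 2) × Fin (2 * n / x)) | S.card = x ∧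
        ∀ w ∉ S, ∃ u ∈ S, (copiesKminusPM n x).Adj w u}.ncard := by
  obtain ⟨c, hc⟩ := hdvd
  obtain ⟨d, hd⟩ := hxe
  have hx0 : 0 < x := by omega
  have hM : 2 * n / x = 2 * c := by
    rw [hc, show 2 * (x * c) = x * (2 * c) by ring, Nat.mul_div_cancel_left _ hx0]
  set M := 2 * n / x with hMdef
  have hM4 : 4 ≤ M := hsz
  have hk : x / 2 = d := by omega
  have hcard : Fintype.card (Fin (x / 2) × Fin M) = n := by
    simp only [Fintype.card_prod, Fintype.card_fin]
    rw [hM, hk]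
    subst hc; subst hd; ring
  -- lower bound for any dominating set
  have hlower : ∀ S : Finset (Fin (x / 2) × Fin M),
      (∀ w ∉ S, ∃ u ∈ S, (copiesKminusPM n x).Adj w u) → x ≤ S.card := by
    intro S hS
    have hfib : S.card = ∑ i : Fin (x / 2), (S.filter (fun v => v.1 = i)).card :=
      Finset.card_eq_sum_card_fiberwise (fun v _ => Finset.mem_univ v.1)
    have hge : ∀ i : Fin (x / 2), 2 ≤ (S.filter (fun v => v.1 = i)).card := by
      intro i
      by_contra h
      push_neg at h
      interval_cases hcf : (S.filter (fun v => v.1 = i)).card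
      · -- empty fiber
        have hemp : S.filter (fun v => v.1 = i) = ∅ := Finset.card_eq_zero.mp hcf
        have hw : ((i, ⟨0, by omega⟩) : Fin (x/2) × Fin M) ∉ S := by
          intro hmem
          have : ((i, ⟨0, by omega⟩) : Fin (x/2) × Fin M) ∈ S.filter (fun v => v.1 = i) :=
            Finset.mem_filter.mpr ⟨hmem, rfl⟩
          simp [hemp] at this
        obtain ⟨u, huS, hadj⟩ := hS _ hw
        obtain ⟨-, h1, -⟩ := adj_iff18.mp hadj
        have : u ∈ S.filter (fun v => v.1 = i) := Finset.mem_filter.mpr ⟨huS, h1.symm⟩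
        simp [hemp] at this
      · -- singleton fiber
        obtain ⟨u, hu⟩ := Finset.card_eq_one.mp hcf
        have huS : u ∈ S ∧ u.1 = i := by
          have : u ∈ S.filter (fun v => v.1 = i) := by simp [hu]
          exact Finset.mem_filter.mp this
        set j := u.2.val with hj
        have hjM : j < M := u.2.isLt
        set p := 2 * (j / 2) + (1 - j % 2) with hp
        have hpM : p < M := by omega
        have hpj : p / 2 = j / 2 ∧ p ≠ j := by constructor <;> omega
        set w : Fin (x/2) × Fin M := (i, ⟨p, hpM⟩) with hwdef
        have hwS : w ∉ S := by
          intro hmem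
          have : w ∈ S.filter (fun v => v.1 = i) := Finset.mem_filter.mpr ⟨hmem, rfl⟩
          rw [hu, Finset.mem_singleton] at this
          have := congrArg (fun v => (v.2 : Fin M).val) this
          simp [hwdef] at this
          exact hpj.2 this
        obtain ⟨u', hu'S, hadj⟩ := hS _ hwS
        obtain ⟨-, h1, h2⟩ := adj_iff18.mp hadj
        have hu'fib : u' ∈ S.filter (fun v => v.1 = i) :=
          Finset.mem_filter.mpr ⟨hu'S, h1.symm⟩
        rw [hu, Finset.mem_singleton] at hu'fib
        subst hu'fib
        exact h2 (by simpa [hwdef] using hpj.1)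
    calc x = ∑ _i : Fin (x / 2), 2 := by simp [hk]; omega
    _ ≤ ∑ i : Fin (x / 2), (S.filter (fun v => v.1 = i)).card :=
        Finset.sum_le_sum (fun i _ => hge i)
    _ = S.card := hfib.symm
  -- counting
  set D : Set (Finset (Fin (x/2) × Fin M)) :=
    {S | S.card = x ∧ ∀ w ∉ S, ∃ u ∈ S, (copiesKminusPM n x).Adj w u} with hD
  set F : (Fin (x/2) → Finset (Fin M)) → Finset (Fin (x/2) × Fin M) :=
    fun g => Finset.univ.biUnion (fun i => (g i).image (fun j => (i, j))) with hF
  have memF : ∀ g v, v ∈ F g ↔ v.2 ∈ g v.1 := by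
    intro g v
    simp only [hF, Finset.mem_biUnion, Finset.mem_univ, true_and, Finset.mem_image]
    constructor
    · rintro ⟨i, j, hj, rfl⟩; exact hj
    · intro h; exact ⟨v.1, v.2, h, rfl⟩
  set A : Finset (Fin (x/2) → Finset (Fin M)) :=
    Fintype.piFinset (fun _ => (Finset.univ : Finset (Fin M)).powersetCard 2) with hA
  have hAmem : ∀ g ∈ A, ∀ i, (g i).card = 2 := by
    intro g hg i
    have := (Fintype.mem_piFinset.mp hg) i
    exact (Finset.mem_powersetCard.mp this).2
  have hAcard : A.card = (M.choose 2) ^ (x / 2) := by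
    rw [hA, Fintype.card_piFinset]
    simp [Finset.card_powersetCard]
  have hFdom : ∀ g ∈ A, F g ∈ D := by
    intro g hg
    constructor
    · -- card
      rw [hF]
      rw [Finset.card_biUnion]
      · have : ∀ i : Fin (x/2), ((g i).image (fun j => (i, j))).card = 2 := by
          intro i
          rw [Finset.card_image_of_injective _ (fun a b h => (Prod.ext_iff.mp h).2)]
          exact hAmem g hg i
        simp only [this]
        simp [hk]; omega
      · intro i _ i' _ hne
        simp only [Finset.disjoint_left, Finset.mem_image]
        rintro a ⟨j, hj, rfl⟩ ⟨j', hj', he⟩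
        exact hne (congrArg Prod.fst he).symm
    · -- dominating
      intro w hw
      obtain ⟨i, j⟩ := w
      have h2 := hAmem g hg i
      obtain ⟨a, b, hab, hgi⟩ := Finset.card_eq_two.mp h2
      by_cases hcase : (a.val / 2 = j.val / 2) ∧ (b.val / 2 = j.val / 2)
      · -- then j ∈ {a, b}, contradiction with w ∉ F g
        exfalso
        apply hw
        rw [memF]
        rw [hgi]
        have : j = a ∨ j = b := by
          by_contra hcon
          push_neg at hcon
          have h1 : a.val ≠ b.val := fun e => hab (Fin.ext e)
          have h2' : j.val ≠ a.val := fun e => hcon.1 (Fin.ext e)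
          have h3 : j.val ≠ b.val := fun e => hcon.2 (Fin.ext e)
          omega
        rcases this with rfl | rfl <;> simp
      · push_neg at hcase
        by_cases ha : a.val / 2 = j.val / 2
        · -- use b
          refine ⟨(i, b), ?_, ?_⟩
          · rw [memF]; simp [hgi]
          · rw [adj_iff18]
            refine ⟨?_, rfl, fun e => hcase ha e.symm⟩
            intro he
            apply hw
            rw [memF, hgi]
            have : j = b := congrArg Prod.snd he
            simp [this]
        · refine ⟨(i, a), ?_, ?_⟩
          · rw [memF]; simp [hgi]
          · rw [adj_iff18]
            refine ⟨?_, rfl, fun e => ha e.symm⟩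
            intro he
            apply hw
            rw [memF, hgi]
            have : j = a := congrArg Prod.snd he
            simp [this]
  have hFinj : Set.InjOn F A := by
    intro g hg g' hg' he
    funext i
    ext j
    have := congrArg (fun s => (i, j) ∈ s) he
    simpa [memF] using this
  have hDfin : D.Finite := Set.toFinite D
  have hncard : (M.choose 2) ^ (x / 2) ≤ D.ncard := by
    rw [← hAcard, Set.ncard_eq_toFinset_card D hDfin]
    apply Finset.card_le_card_of_injOn F
    · intro g hg
      simp only [Finset.mem_coe, Set.Finite.mem_toFinset]
      exact hFdom g hg
    · intro g hg g' hg' h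
      exact hFinj (by simpa using hg) (by simpa using hg') h
  have hchoosepos : 0 < (M.choose 2) ^ (x / 2) :=
    Nat.pow_pos (Nat.choose_pos (by omega))
  have hne : D.Nonempty := by
    apply Set.nonempty_of_ncard_ne_zero
    omega
  obtain ⟨S0, hS0⟩ := hne
  exact ⟨hcard, ⟨S0, hS0.1, hS0.2⟩, hlower, hncard⟩
end
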